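/- Let A and B be finite types and let ρ be a density matrix on A × B. The following are equivalent: (i) there exist finite types A' and B' and a density matrix τ on (A × A') × (B × B') that is an extension of ρ (meaning ∑_{a' : A', b' : B'} τ ((a,a'),(b,b')) ((c,a'),(d,b')) = ρ (a,b) (c,d) for all a, c : A and b, d : B) together with unitary matrices U on A × A' and V on B × B' such that U† τ₁ U and V† τ₂ V are diagonal (where τ₁ and τ₂ are the reduced matrices of τ on A × A' and B × B') and C((U ⊗ V)† τ (U ⊗ V)) = 0; (ii) ρ is separable, i.e., there exist a finite index type I, non-negative reals p : I → ℝ with ∑_i p i = 1, and unit vectors α : I → (A → ℂ) and β : I → (B → ℂ) such that ρ = ∑_i p i · (α_i α_i†) ⊗ (β_i β_i†). -/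

import Mathlib

open Matrix
open scoped Kronecker ComplexOrder

/-- The `l₁`-coherence of a matrix with respect to the standard basis:
the sum of the absolute values of all off-diagonal entries. -/
noncomputable def coh {ι : Type} [Fintype ι] [DecidableEq ι] (M : Matrix ι ι ℂ) : ℝ :=
  ∑ i, ∑ j, if i ≠ j then ‖M i j‖ else 0

set_option maxHeartbeats 1000000
set_option linter.unusedSectionVars false

lemma exists_unitary_col {A : Type} [Fintype A] [DecidableEq A] (a₀ : A)
    (α : A → ℂ) (hα : ∑ x, star (α x) * α x = 1) :
    ∃ U : Matrix A A ℂ, U ∈ Matrix.unitaryGroup A ℂ ∧ ∀ a, U a a₀ = α a := by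
  have card : Module.finrank ℂ (EuclideanSpace ℂ A) = Fintype.card A := by
    simp [finrank_euclideanSpace]
  set v : A → EuclideanSpace ℂ A := fun _ => (WithLp.toLp 2 α : EuclideanSpace ℂ A) with hv
  have horth : Orthonormal ℂ (({a₀} : Set A).restrict v) := by
    rw [orthonormal_iff_ite]
    rintro ⟨i, hi⟩ ⟨j, hj⟩
    simp only [Set.mem_singleton_iff] at hi hj
    subst hi; subst hj
    simp only [Set.restrict, v, PiLp.inner_apply, RCLike.inner_apply]
    simpa [mul_comm] using hα
  obtain ⟨b, hb⟩ := horth.exists_orthonormalBasis_extension_of_card_eq card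
  have hbo := b.orthonormal
  rw [orthonormal_iff_ite] at hbo
  refine ⟨Matrix.of fun a a' => b a' a, ?_, fun a => ?_⟩
  · rw [Matrix.mem_unitaryGroup_iff']
    ext i j
    have h1 : (star (Matrix.of fun a a' => b a' a) * Matrix.of fun a a' => b a' a) i j
        = ∑ k, star (b i k) * b j k := by
      simp [Matrix.mul_apply, Matrix.star_apply, mul_comm]
    rw [h1]
    have := hbo i j
    rw [PiLp.inner_apply] at this
    simp only [RCLike.inner_apply] at this
    rw [show (∑ k, star (b i k) * b j k) = ∑ k, b j k * (starRingEnd ℂ) (b i k) from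
      Finset.sum_congr rfl fun k _ => mul_comm _ _, this]
    simp [Matrix.one_apply]
  · have : b a₀ = v a₀ := hb a₀ rfl
    simp [this, v]

lemma kron_conjTranspose {l m n p : Type} [Fintype l] [Fintype m] [Fintype n] [Fintype p]
    (A : Matrix l m ℂ) (B : Matrix n p ℂ) : (A ⊗ₖ B)ᴴ = Aᴴ ⊗ₖ Bᴴ := by
  ext ⟨i, j⟩ ⟨k, l⟩
  simp [Matrix.conjTranspose_apply, Matrix.kroneckerMap_apply, mul_comm]

lemma kron_unitary {m n : Type} [Fintype m] [Fintype n] [DecidableEq m] [DecidableEq n]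
    {U : Matrix m m ℂ} {V : Matrix n n ℂ} (hU : U ∈ Matrix.unitaryGroup m ℂ)
    (hV : V ∈ Matrix.unitaryGroup n ℂ) : U ⊗ₖ V ∈ Matrix.unitaryGroup (m × n) ℂ := by
  rw [Matrix.mem_unitaryGroup_iff] at *
  rw [Matrix.star_eq_conjTranspose, kron_conjTranspose, ← Matrix.mul_kronecker_mul,
    ← Matrix.star_eq_conjTranspose U, ← Matrix.star_eq_conjTranspose V, hU, hV,
    Matrix.one_kronecker_one]

lemma coh_eq_zero_of {ι : Type} [Fintype ι] [DecidableEq ι] {M : Matrix ι ι ℂ}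
    (h : ∀ i j, i ≠ j → M i j = 0) : coh M = 0 := by
  unfold coh
  refine Finset.sum_eq_zero fun i _ => Finset.sum_eq_zero fun j _ => ?_
  by_cases hij : i = j
  · simp [hij]
  · simp [hij, h i j hij]

lemma offdiag_eq_zero_of_coh {ι : Type} [Fintype ι] [DecidableEq ι] {M : Matrix ι ι ℂ}
    (h : coh M = 0) : ∀ i j, i ≠ j → M i j = 0 := by
  intro i j hij
  unfold coh at h
  rw [Finset.sum_eq_zero_iff_of_nonneg] at h
  · have h2 := h i (Finset.mem_univ i)
    rw [Finset.sum_eq_zero_iff_of_nonneg] at h2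
    · have h3 := h2 j (Finset.mem_univ j)
      rw [if_pos hij] at h3
      exact norm_eq_zero.mp h3
    · intro k _; positivity
  · intro k _
    refine Finset.sum_nonneg fun l _ => ?_
    positivity

section mpr
variable {A B : Type} [Fintype A] [DecidableEq A] [Fintype B] [DecidableEq B]
  {I : Type} [Fintype I] [DecidableEq I]

lemma sep_tau_entry {X Y : Type} [Fintype X] [Fintype Y]
    (p : I → ℝ) (m : I → X → ℂ) (n : I → Y → ℂ) (hp : ∀ i, 0 ≤ p i) :
    ∀ r r' : X × Y,
      ((Matrix.of fun i (r : X × Y) => ((Real.sqrt (p i) : ℂ)) * star (m i r.1 * n i r.2))ᴴ *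
        (Matrix.of fun i (r : X × Y) => ((Real.sqrt (p i) : ℂ)) * star (m i r.1 * n i r.2))) r r'
      = ∑ i, (p i : ℂ) * ((m i r.1 * n i r.2) * star (m i r'.1 * n i r'.2)) := by
  intro r r'
  rw [Matrix.mul_apply]
  refine Finset.sum_congr rfl fun i _ => ?_
  simp only [Matrix.conjTranspose_apply, Matrix.of_apply, star_mul',
    Complex.star_def, Complex.conj_ofReal, Complex.conj_conj]
  rw [show ((p i : ℂ)) = ((Real.sqrt (p i) : ℂ)) * ((Real.sqrt (p i) : ℂ)) by
    rw [← Complex.ofReal_mul, Real.mul_self_sqrt (hp i)]]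
  ring

lemma mpr_main (ρ : Matrix (A × B) (A × B) ℂ) (a₀ : A) (b₀ : B)
    (p : I → ℝ) (α : I → A → ℂ) (β : I → B → ℂ)
    (hp : ∀ i, 0 ≤ p i) (hsum : ∑ i, p i = 1)
    (hα : ∀ i, ∑ x, star (α i x) * α i x = 1)
    (hβ : ∀ i, ∑ x, star (β i x) * β i x = 1)
    (hρeq : ρ = ∑ i, (p i : ℂ) • ((Matrix.of fun x y : A => α i x * star (α i y)) ⊗ₖ
          (Matrix.of fun x y : B => β i x * star (β i y)))) :
    (∃ (A' B' : Type) (_ : Fintype A') (_ : DecidableEq A') (_ : Fintype B')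
        (_ : DecidableEq B')
        (τ : Matrix ((A × A') × (B × B')) ((A × A') × (B × B')) ℂ),
      τ.PosSemidef ∧ τ.trace = 1 ∧
      (∀ (a c : A) (b d : B),
        (∑ a' : A', ∑ b' : B', τ ((a, a'), (b, b')) ((c, a'), (d, b'))) = ρ (a, b) (c, d)) ∧
      ∃ (U : Matrix (A × A') (A × A') ℂ) (V : Matrix (B × B') (B × B') ℂ),
        U ∈ Matrix.unitaryGroup (A × A') ℂ ∧ V ∈ Matrix.unitaryGroup (B × B') ℂ ∧
        (Uᴴ * (Matrix.of fun x x' : A × A' => ∑ y : B × B', τ (x, y) (x', y)) * U).IsDiag ∧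
        (Vᴴ * (Matrix.of fun y y' : B × B' => ∑ x : A × A', τ (x, y) (x, y')) * V).IsDiag ∧
        coh ((U ⊗ₖ V)ᴴ * τ * (U ⊗ₖ V)) = 0) := by
  classical
  -- the local "flag" vectors
  set m : I → (A × I) → ℂ := fun i s => if s.2 = i then α i s.1 else 0 with hm
  set n : I → (B × I) → ℂ := fun i s => if s.2 = i then β i s.1 else 0 with hn
  set C : Matrix I ((A × I) × (B × I)) ℂ :=
    Matrix.of fun i r => ((Real.sqrt (p i) : ℂ)) * star (m i r.1 * n i r.2) with hC
  set τ : Matrix ((A × I) × (B × I)) ((A × I) × (B × I)) ℂ := Cᴴ * C with hτdef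
  have hτ : ∀ r r', τ r r'
      = ∑ i, (p i : ℂ) * ((m i r.1 * n i r.2) * star (m i r'.1 * n i r'.2)) :=
    sep_tau_entry p m n hp
  -- normalization of the flag vectors
  have hmnorm : ∀ i, ∑ s : A × I, m i s * star (m i s) = 1 := by
    intro i
    have h1 : ∀ s : A × I, m i s * star (m i s)
        = if s.2 = i then α i s.1 * star (α i s.1) else 0 := by
      rintro ⟨a, j⟩; by_cases h : j = i <;> simp [hm, h]
    rw [Finset.sum_congr rfl fun s _ => h1 s, Fintype.sum_prod_type]
    simp only [Finset.sum_ite_eq' Finset.univ, Finset.mem_univ, if_true]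
    simpa [mul_comm] using hα i
  have hnnorm : ∀ i, ∑ s : B × I, n i s * star (n i s) = 1 := by
    intro i
    have h1 : ∀ s : B × I, n i s * star (n i s)
        = if s.2 = i then β i s.1 * star (β i s.1) else 0 := by
      rintro ⟨b, j⟩; by_cases h : j = i <;> simp [hn, h]
    rw [Finset.sum_congr rfl fun s _ => h1 s, Fintype.sum_prod_type]
    simp only [Finset.sum_ite_eq' Finset.univ, Finset.mem_univ, if_true]
    simpa [mul_comm] using hβ i
  -- trace of τ
  have htrace : τ.trace = 1 := by
    have h1 : τ.trace = ∑ r : (A × I) × (B × I), τ r r := rfl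
    rw [h1]
    have h2 : ∀ r : (A × I) × (B × I), τ r r
        = ∑ i, (p i : ℂ) * ((m i r.1 * star (m i r.1)) * (n i r.2 * star (n i r.2))) := by
      intro r
      rw [hτ r r]
      refine Finset.sum_congr rfl fun i _ => ?_
      rw [star_mul']; ring
    rw [Finset.sum_congr rfl fun r _ => h2 r, Finset.sum_comm]
    have h3 : ∀ i, ∑ r : (A × I) × (B × I),
        (p i : ℂ) * ((m i r.1 * star (m i r.1)) * (n i r.2 * star (n i r.2))) = (p i : ℂ) := by
      intro i
      rw [← Finset.mul_sum]
      rw [Fintype.sum_prod_type]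
      have : ∑ s : A × I, ∑ t : B × I, (m i s * star (m i s)) * (n i t * star (n i t))
          = (∑ s : A × I, m i s * star (m i s)) * (∑ t : B × I, n i t * star (n i t)) := by
        rw [Finset.sum_mul_sum]
      rw [this, hmnorm i, hnnorm i, one_mul, mul_one]
    rw [Finset.sum_congr rfl fun i _ => h3 i]
    rw [← Complex.ofReal_sum, hsum, Complex.ofReal_one]
  -- entries of ρ
  have hρe : ∀ (a c : A) (b d : B), ρ (a, b) (c, d)
      = ∑ i, (p i : ℂ) * ((α i a * star (α i c)) * (β i b * star (β i d))) := by
    intro a c b d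
    rw [hρeq]
    simp [Matrix.sum_apply, Matrix.smul_apply, Matrix.kroneckerMap_apply, smul_eq_mul]
  -- the marginal property
  have hmarg : ∀ (a c : A) (b d : B),
      (∑ a' : I, ∑ b' : I, τ ((a, a'), (b, b')) ((c, a'), (d, b'))) = ρ (a, b) (c, d) := by
    intro a c b d
    have hG : ∀ (a' b' i : I),
        (p i : ℂ) * ((m i (a, a') * n i (b, b')) * star (m i (c, a') * n i (d, b')))
        = if b' = i then (if a' = i then
            (p i : ℂ) * ((α i a * star (α i c)) * (β i b * star (β i d))) else 0) else 0 := by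
      intro a' b' i
      by_cases h1 : a' = i <;> by_cases h2 : b' = i <;> simp only [hm, hn, h1, h2, if_pos, if_neg,
        ite_true, ite_false] <;> simp [h1, h2]
      exact Or.inl (by ring)
    calc (∑ a' : I, ∑ b' : I, τ ((a, a'), (b, b')) ((c, a'), (d, b')))
        = ∑ a' : I, ∑ b' : I, ∑ i,
            (p i : ℂ) * ((m i (a, a') * n i (b, b')) * star (m i (c, a') * n i (d, b'))) := by
          exact Finset.sum_congr rfl fun a' _ => Finset.sum_congr rfl fun b' _ => hτ _ _
      _ = ∑ a' : I, ∑ i, ∑ b' : I,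
            (p i : ℂ) * ((m i (a, a') * n i (b, b')) * star (m i (c, a') * n i (d, b'))) := by
          exact Finset.sum_congr rfl fun a' _ => Finset.sum_comm
      _ = ∑ a' : I, ∑ i, if a' = i then
            (p i : ℂ) * ((α i a * star (α i c)) * (β i b * star (β i d))) else 0 := by
          refine Finset.sum_congr rfl fun a' _ => Finset.sum_congr rfl fun i _ => ?_
          rw [Finset.sum_congr rfl fun b' _ => hG a' b' i]
          simp [Finset.sum_ite_eq']
      _ = ∑ a' : I, (p a' : ℂ) * ((α a' a * star (α a' c)) * (β a' b * star (β a' d))) := by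
          refine Finset.sum_congr rfl fun a' _ => ?_
          simp [Finset.sum_ite_eq]
      _ = ρ (a, b) (c, d) := (hρe a c b d).symm
  -- choose local unitaries
  choose W hWu hWcol using fun i : I => exists_unitary_col a₀ (α i) (hα i)
  choose Z hZu hZcol using fun i : I => exists_unitary_col b₀ (β i) (hβ i)
  set U : Matrix (A × I) (A × I) ℂ :=
    Matrix.of fun s t => if s.2 = t.2 then W t.2 s.1 t.1 else 0 with hU
  set V : Matrix (B × I) (B × I) ℂ :=
    Matrix.of fun s t => if s.2 = t.2 then Z t.2 s.1 t.1 else 0 with hV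
  have hW1e : ∀ (i : I) (s t : A), (∑ a, star (W i a s) * W i a t) = if s = t then 1 else 0 := by
    intro i s t
    have h1 := congrFun (congrFun (Matrix.mem_unitaryGroup_iff'.mp (hWu i)) s) t
    rw [Matrix.mul_apply] at h1
    simp only [Matrix.star_apply] at h1
    rw [h1, Matrix.one_apply]
  have hZ1e : ∀ (i : I) (s t : B), (∑ a, star (Z i a s) * Z i a t) = if s = t then 1 else 0 := by
    intro i s t
    have h1 := congrFun (congrFun (Matrix.mem_unitaryGroup_iff'.mp (hZu i)) s) t
    rw [Matrix.mul_apply] at h1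
    simp only [Matrix.star_apply] at h1
    rw [h1, Matrix.one_apply]
  have hUmem : U ∈ Matrix.unitaryGroup (A × I) ℂ := by
    rw [Matrix.mem_unitaryGroup_iff']
    ext s t
    rw [Matrix.mul_apply]
    have e2 : ∀ r : A × I, (star U) s r * U r t
        = if r.2 = s.2 then (if r.2 = t.2 then star (W s.2 r.1 s.1) * W t.2 r.1 t.1 else 0)
          else 0 := by
      rintro ⟨a, j⟩
      simp only [hU, Matrix.of_apply, Matrix.star_apply]
      split_ifs <;> simp
    rw [Finset.sum_congr rfl fun r _ => e2 r, Fintype.sum_prod_type]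
    simp only [Finset.sum_ite_eq' Finset.univ, Finset.mem_univ, if_true]
    by_cases hst : s.2 = t.2
    · obtain ⟨s1, s2⟩ := s; obtain ⟨t1, t2⟩ := t
      dsimp only at hst ⊢
      subst hst
      rw [Finset.sum_congr rfl fun a _ => if_pos rfl, hW1e _ s1 t1]
      simp [Matrix.one_apply, Prod.ext_iff]
    · rw [Finset.sum_eq_zero fun a _ => if_neg hst, Matrix.one_apply,
        if_neg (by rintro rfl; exact hst rfl)]
  have hVmem : V ∈ Matrix.unitaryGroup (B × I) ℂ := by
    rw [Matrix.mem_unitaryGroup_iff']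
    ext s t
    rw [Matrix.mul_apply]
    have e2 : ∀ r : B × I, (star V) s r * V r t
        = if r.2 = s.2 then (if r.2 = t.2 then star (Z s.2 r.1 s.1) * Z t.2 r.1 t.1 else 0)
          else 0 := by
      rintro ⟨a, j⟩
      simp only [hV, Matrix.of_apply, Matrix.star_apply]
      split_ifs <;> simp
    rw [Finset.sum_congr rfl fun r _ => e2 r, Fintype.sum_prod_type]
    simp only [Finset.sum_ite_eq' Finset.univ, Finset.mem_univ, if_true]
    by_cases hst : s.2 = t.2
    · obtain ⟨s1, s2⟩ := s; obtain ⟨t1, t2⟩ := t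
      dsimp only at hst ⊢
      subst hst
      rw [Finset.sum_congr rfl fun a _ => if_pos rfl, hZ1e _ s1 t1]
      simp [Matrix.one_apply, Prod.ext_iff]
    · rw [Finset.sum_eq_zero fun a _ => if_neg hst, Matrix.one_apply,
        if_neg (by rintro rfl; exact hst rfl)]
  -- collapse of columns against the flag vectors
  have hUα : ∀ (i : I) (s : A × I),
      (∑ r : A × I, star (U r s) * m i r) = if s = (a₀, i) then 1 else 0 := by
    intro i s
    have e2 : ∀ r : A × I, star (U r s) * m i r
        = if r.2 = i then (if r.2 = s.2 then star (W s.2 r.1 s.1) * α i r.1 else 0) else 0 := by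
      rintro ⟨a, j⟩
      simp only [hU, hm, Matrix.of_apply, Matrix.star_apply]
      split_ifs <;> simp
    rw [Finset.sum_congr rfl fun r _ => e2 r, Fintype.sum_prod_type]
    simp only [Finset.sum_ite_eq' Finset.univ, Finset.mem_univ, if_true]
    by_cases his : i = s.2
    · obtain ⟨s1, s2⟩ := s
      dsimp only at his ⊢
      subst his
      rw [Finset.sum_congr rfl fun a _ => by rw [if_pos rfl, ← hWcol i a], hW1e i s1 a₀]
      simp [Prod.ext_iff]
    · rw [if_neg (by rintro rfl; exact his rfl)]
      exact Finset.sum_eq_zero fun a _ => if_neg his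
  have hVβ : ∀ (i : I) (s : B × I),
      (∑ r : B × I, star (V r s) * n i r) = if s = (b₀, i) then 1 else 0 := by
    intro i s
    have e2 : ∀ r : B × I, star (V r s) * n i r
        = if r.2 = i then (if r.2 = s.2 then star (Z s.2 r.1 s.1) * β i r.1 else 0) else 0 := by
      rintro ⟨a, j⟩
      simp only [hV, hn, Matrix.of_apply, Matrix.star_apply]
      split_ifs <;> simp
    rw [Finset.sum_congr rfl fun r _ => e2 r, Fintype.sum_prod_type]
    simp only [Finset.sum_ite_eq' Finset.univ, Finset.mem_univ, if_true]
    by_cases his : i = s.2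
    · obtain ⟨s1, s2⟩ := s
      dsimp only at his ⊢
      subst his
      rw [Finset.sum_congr rfl fun a _ => by rw [if_pos rfl, ← hZcol i a], hZ1e i s1 b₀]
      simp [Prod.ext_iff]
    · rw [if_neg (by rintro rfl; exact his rfl)]
      exact Finset.sum_eq_zero fun a _ => if_neg his
  have hUα' : ∀ (i : I) (s : A × I),
      (∑ r : A × I, star (m i r) * U r s) = if s = (a₀, i) then 1 else 0 := by
    intro i s
    have h1 := congrArg star (hUα i s)
    rw [star_sum] at h1
    simpa [star_mul', star_star, apply_ite (star : ℂ → ℂ), mul_comm] using h1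
  have hVβ' : ∀ (i : I) (s : B × I),
      (∑ r : B × I, star (n i r) * V r s) = if s = (b₀, i) then 1 else 0 := by
    intro i s
    have h1 := congrArg star (hVβ i s)
    rw [star_sum] at h1
    simpa [star_mul', star_star, apply_ite (star : ℂ → ℂ), mul_comm] using h1
  -- conjugated rank-one blocks
  have hUMU : ∀ (i : I) (s t : A × I),
      (Uᴴ * (Matrix.of fun x y => m i x * star (m i y)) * U) s t
      = (if s = (a₀, i) then 1 else 0) * (if t = (a₀, i) then 1 else 0) := by
    intro i s t
    have e : (Uᴴ * (Matrix.of fun x y => m i x * star (m i y)) * U) s t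
        = ∑ r : A × I, ∑ r' : A × I, (star (U r s) * m i r) * (star (m i r') * U r' t) := by
      simp only [Matrix.mul_apply, Matrix.conjTranspose_apply, Matrix.of_apply, Finset.sum_mul]
      rw [Finset.sum_comm]
      exact Finset.sum_congr rfl fun r _ => Finset.sum_congr rfl fun r' _ => by ring
    rw [e, ← Finset.sum_mul_sum, hUα i s, hUα' i t]
  have hVNV : ∀ (i : I) (s t : B × I),
      (Vᴴ * (Matrix.of fun x y => n i x * star (n i y)) * V) s t
      = (if s = (b₀, i) then 1 else 0) * (if t = (b₀, i) then 1 else 0) := by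
    intro i s t
    have e : (Vᴴ * (Matrix.of fun x y => n i x * star (n i y)) * V) s t
        = ∑ r : B × I, ∑ r' : B × I, (star (V r s) * n i r) * (star (n i r') * V r' t) := by
      simp only [Matrix.mul_apply, Matrix.conjTranspose_apply, Matrix.of_apply, Finset.sum_mul]
      rw [Finset.sum_comm]
      exact Finset.sum_congr rfl fun r _ => Finset.sum_congr rfl fun r' _ => by ring
    rw [e, ← Finset.sum_mul_sum, hVβ i s, hVβ' i t]
  -- reduced matrices
  have hτ1 : ∀ (x x' : A × I), (∑ y : B × I, τ (x, y) (x', y))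
      = ∑ i, (p i : ℂ) * (m i x * star (m i x')) := by
    intro x x'
    rw [Finset.sum_congr rfl fun y _ => hτ (x, y) (x', y), Finset.sum_comm]
    refine Finset.sum_congr rfl fun i _ => ?_
    have e : ∀ y : B × I, (p i : ℂ) * ((m i x * n i y) * star (m i x' * n i y))
        = ((p i : ℂ) * (m i x * star (m i x'))) * (n i y * star (n i y)) := by
      intro y; rw [star_mul']; ring
    rw [Finset.sum_congr rfl fun y _ => e y, ← Finset.mul_sum, hnnorm i, mul_one]
  have hτ2 : ∀ (y y' : B × I), (∑ x : A × I, τ (x, y) (x, y'))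
      = ∑ i, (p i : ℂ) * (n i y * star (n i y')) := by
    intro y y'
    rw [Finset.sum_congr rfl fun x _ => hτ (x, y) (x, y'), Finset.sum_comm]
    refine Finset.sum_congr rfl fun i _ => ?_
    have e : ∀ x : A × I, (p i : ℂ) * ((m i x * n i y) * star (m i x * n i y'))
        = ((p i : ℂ) * (n i y * star (n i y'))) * (m i x * star (m i x)) := by
      intro x; rw [star_mul']; ring
    rw [Finset.sum_congr rfl fun x _ => e x, ← Finset.mul_sum, hmnorm i, mul_one]
  have hdiagU : (Uᴴ * (Matrix.of fun x x' : A × I => ∑ y : B × I, τ (x, y) (x', y)) * U).IsDiag := by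
    have hmat : (Matrix.of fun x x' : A × I => ∑ y : B × I, τ (x, y) (x', y))
        = ∑ i, (p i : ℂ) • (Matrix.of fun x y => m i x * star (m i y)) := by
      ext x x'
      simp only [Matrix.of_apply, Matrix.sum_apply, Matrix.smul_apply, smul_eq_mul]
      exact hτ1 x x'
    rw [hmat, Matrix.mul_sum, Matrix.sum_mul]
    intro s t hst
    rw [Matrix.sum_apply]
    refine Finset.sum_eq_zero fun i _ => ?_
    have e : (Uᴴ * ((p i : ℂ) • Matrix.of fun x y => m i x * star (m i y)) * U)
        = (p i : ℂ) • (Uᴴ * (Matrix.of fun x y => m i x * star (m i y)) * U) := by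
      rw [Matrix.mul_smul, Matrix.smul_mul]
    rw [e, Matrix.smul_apply, hUMU i s t, smul_eq_mul]
    by_cases h1 : s = (a₀, i)
    · rw [if_pos h1, if_neg (fun h2 => hst (h1.trans h2.symm))]; ring
    · rw [if_neg h1]; ring
  have hdiagV : (Vᴴ * (Matrix.of fun y y' : B × I => ∑ x : A × I, τ (x, y) (x, y')) * V).IsDiag := by
    have hmat : (Matrix.of fun y y' : B × I => ∑ x : A × I, τ (x, y) (x, y'))
        = ∑ i, (p i : ℂ) • (Matrix.of fun x y => n i x * star (n i y)) := by
      ext y y'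
      simp only [Matrix.of_apply, Matrix.sum_apply, Matrix.smul_apply, smul_eq_mul]
      exact hτ2 y y'
    rw [hmat, Matrix.mul_sum, Matrix.sum_mul]
    intro s t hst
    rw [Matrix.sum_apply]
    refine Finset.sum_eq_zero fun i _ => ?_
    have e : (Vᴴ * ((p i : ℂ) • Matrix.of fun x y => n i x * star (n i y)) * V)
        = (p i : ℂ) • (Vᴴ * (Matrix.of fun x y => n i x * star (n i y)) * V) := by
      rw [Matrix.mul_smul, Matrix.smul_mul]
    rw [e, Matrix.smul_apply, hVNV i s t, smul_eq_mul]
    by_cases h1 : s = (b₀, i)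
    · rw [if_pos h1, if_neg (fun h2 => hst (h1.trans h2.symm))]; ring
    · rw [if_neg h1]; ring
  -- vanishing coherence
  have hσ : ∀ r c : (A × I) × (B × I), r ≠ c → ((U ⊗ₖ V)ᴴ * τ * (U ⊗ₖ V)) r c = 0 := by
    have hτkron : τ = ∑ i, (p i : ℂ) •
        ((Matrix.of fun x y => m i x * star (m i y)) ⊗ₖ
         (Matrix.of fun x y => n i x * star (n i y))) := by
      ext r r'
      rw [hτ r r']
      simp only [Matrix.sum_apply, Matrix.smul_apply, Matrix.kroneckerMap_apply,
        Matrix.of_apply, smul_eq_mul]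
      exact Finset.sum_congr rfl fun i _ => by rw [star_mul']; ring
    have hconj : (U ⊗ₖ V)ᴴ * τ * (U ⊗ₖ V) = ∑ i, (p i : ℂ) •
        ((Uᴴ * (Matrix.of fun x y => m i x * star (m i y)) * U) ⊗ₖ
         (Vᴴ * (Matrix.of fun x y => n i x * star (n i y)) * V)) := by
      rw [hτkron, Matrix.mul_sum, Matrix.sum_mul]
      refine Finset.sum_congr rfl fun i _ => ?_
      rw [Matrix.mul_smul, Matrix.smul_mul, kron_conjTranspose,
        ← Matrix.mul_kronecker_mul, ← Matrix.mul_kronecker_mul]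
    intro r c hrc
    rw [hconj, Matrix.sum_apply]
    refine Finset.sum_eq_zero fun i _ => ?_
    rw [Matrix.smul_apply, Matrix.kroneckerMap_apply, hUMU i r.1 c.1, hVNV i r.2 c.2,
      smul_eq_mul]
    by_cases h1 : r.1 = (a₀, i) <;> by_cases h2 : c.1 = (a₀, i) <;>
      by_cases h3 : r.2 = (b₀, i) <;> by_cases h4 : c.2 = (b₀, i) <;>
      first
        | exact absurd (Prod.ext_iff.mpr ⟨h1.trans h2.symm, h3.trans h4.symm⟩) hrc
        | simp [h1, h2, h3, h4]
  exact ⟨I, I, inferInstance, inferInstance, inferInstance, inferInstance, τ,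
    hτdef ▸ Matrix.posSemidef_conjTranspose_mul_self C, htrace, hmarg, U, V, hUmem, hVmem,
    hdiagU, hdiagV, coh_eq_zero_of hσ⟩
end mpr

section mp
variable {A B A' B' : Type} [Fintype A] [DecidableEq A] [Fintype B] [DecidableEq B]
  [Fintype A'] [DecidableEq A'] [Fintype B'] [DecidableEq B']

lemma mp_main (ρ : Matrix (A × B) (A × B) ℂ) (a₀ : A) (b₀ : B)
    (τ : Matrix ((A × A') × (B × B')) ((A × A') × (B × B')) ℂ)
    (hps : τ.PosSemidef) (htr : τ.trace = 1)
    (hmarg : ∀ (a c : A) (b d : B),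
      (∑ a' : A', ∑ b' : B', τ ((a, a'), (b, b')) ((c, a'), (d, b'))) = ρ (a, b) (c, d))
    (U : Matrix (A × A') (A × A') ℂ) (V : Matrix (B × B') (B × B') ℂ)
    (hU : U ∈ Matrix.unitaryGroup (A × A') ℂ) (hV : V ∈ Matrix.unitaryGroup (B × B') ℂ)
    (hcoh : coh ((U ⊗ₖ V)ᴴ * τ * (U ⊗ₖ V)) = 0) :
    (∃ (I : Type) (_ : Fintype I) (p : I → ℝ) (α : I → A → ℂ) (β : I → B → ℂ),
      (∀ i, 0 ≤ p i) ∧ (∑ i, p i) = 1 ∧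
      (∀ i, ∑ x, star (α i x) * α i x = 1) ∧
      (∀ i, ∑ x, star (β i x) * β i x = 1) ∧
      ρ = ∑ i, (p i : ℂ) •
        ((Matrix.of fun x y : A => α i x * star (α i y)) ⊗ₖ
          (Matrix.of fun x y : B => β i x * star (β i y)))) := by
  classical
  set Wm : Matrix ((A × A') × (B × B')) ((A × A') × (B × B')) ℂ := U ⊗ₖ V with hWm
  have hWmem : Wm ∈ Matrix.unitaryGroup ((A × A') × (B × B')) ℂ := kron_unitary hU hV
  set σ := Wmᴴ * τ * Wm with hσdef
  have hσps : σ.PosSemidef := hps.conjTranspose_mul_mul_same Wm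
  have hoff : ∀ r c, r ≠ c → σ r c = 0 := offdiag_eq_zero_of_coh hcoh
  -- the diagonal entries of σ
  have hdiagpos : ∀ k, 0 ≤ σ k k := by
    intro k
    have h1 := hσps.dotProduct_mulVec_nonneg (Pi.single k 1)
    simpa [Matrix.mulVec_single, dotProduct, Pi.single_apply, Matrix.star_apply,
      apply_ite (star : ℂ → ℂ), Finset.sum_ite_eq'] using h1
  set q : ((A × A') × (B × B')) → ℝ := fun k => (σ k k).re with hqdef
  have hq0 : ∀ k, 0 ≤ q k := fun k => (Complex.le_def.mp (hdiagpos k)).1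
  have hdiagval : ∀ k, σ k k = ((q k : ℝ) : ℂ) := by
    intro k
    have h2 := (Complex.le_def.mp (hdiagpos k)).2
    exact Complex.ext rfl (by simpa using h2.symm)
  have hσdiag : σ = Matrix.diagonal fun k => ((q k : ℝ) : ℂ) := by
    ext r c
    by_cases h : r = c
    · subst h; rw [Matrix.diagonal_apply_eq]; exact hdiagval r
    · rw [Matrix.diagonal_apply_ne _ h]; exact hoff r c h
  have hWW : Wm * Wmᴴ = 1 := by
    have := Matrix.mem_unitaryGroup_iff.mp hWmem
    rwa [Matrix.star_eq_conjTranspose] at this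
  have hτeq : τ = Wm * σ * Wmᴴ := by
    calc τ = (Wm * Wmᴴ) * τ * (Wm * Wmᴴ) := by rw [hWW]; simp
      _ = Wm * (Wmᴴ * τ * Wm) * Wmᴴ := by simp only [Matrix.mul_assoc]
      _ = Wm * σ * Wmᴴ := by rw [hσdef]
  have hτentry : ∀ r c, τ r c = ∑ k, ((q k : ℝ) : ℂ) * (Wm r k * star (Wm c k)) := by
    intro r c
    rw [hτeq, hσdiag]
    rw [Matrix.mul_apply]
    refine Finset.sum_congr rfl fun k _ => ?_
    rw [Matrix.mul_diagonal, Matrix.conjTranspose_apply]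
    ring
  -- trace of σ
  have htrσ : ∑ k, q k = 1 := by
    have h1 : σ.trace = 1 := by
      rw [hσdef, Matrix.trace_mul_comm, ← Matrix.mul_assoc, hWW, Matrix.one_mul, htr]
    have h2 : σ.trace = ((∑ k, q k : ℝ) : ℂ) := by
      rw [Matrix.trace]
      push_cast
      exact Finset.sum_congr rfl fun k _ => hdiagval k
    rw [h2] at h1
    exact_mod_cast h1
  -- column norms
  have hcolU : ∀ x : A × A', (∑ s : A × A', Complex.normSq (U s x)) = 1 := by
    intro x
    have h1 := congrFun (congrFun (Matrix.mem_unitaryGroup_iff'.mp hU) x) x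
    rw [Matrix.mul_apply] at h1
    simp only [Matrix.star_apply, Matrix.one_apply_eq] at h1
    have h2 : ∑ s : A × A', ((Complex.normSq (U s x) : ℝ) : ℂ) = 1 := by
      simpa [Complex.normSq_eq_conj_mul_self] using h1
    rw [← Complex.ofReal_sum] at h2
    exact_mod_cast h2
  have hcolV : ∀ x : B × B', (∑ s : B × B', Complex.normSq (V s x)) = 1 := by
    intro x
    have h1 := congrFun (congrFun (Matrix.mem_unitaryGroup_iff'.mp hV) x) x
    rw [Matrix.mul_apply] at h1
    simp only [Matrix.star_apply, Matrix.one_apply_eq] at h1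
    have h2 : ∑ s : B × B', ((Complex.normSq (V s x) : ℝ) : ℂ) = 1 := by
      simpa [Complex.normSq_eq_conj_mul_self] using h1
    rw [← Complex.ofReal_sum] at h2
    exact_mod_cast h2
  set s1 : ((A × A') × (B × B')) → A' → ℝ :=
    fun t a' => ∑ a, Complex.normSq (U (a, a') t.1) with hs1def
  set s2 : ((A × A') × (B × B')) → B' → ℝ :=
    fun t b' => ∑ b, Complex.normSq (V (b, b') t.2) with hs2def
  have hs1nn : ∀ t a', 0 ≤ s1 t a' :=
    fun t a' => Finset.sum_nonneg fun a _ => Complex.normSq_nonneg _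
  have hs2nn : ∀ t b', 0 ≤ s2 t b' :=
    fun t b' => Finset.sum_nonneg fun b _ => Complex.normSq_nonneg _
  have hs1sum : ∀ t, ∑ a', s1 t a' = 1 := by
    intro t
    have h1 := hcolU t.1
    rw [Fintype.sum_prod_type_right] at h1
    exact h1
  have hs2sum : ∀ t, ∑ b', s2 t b' = 1 := by
    intro t
    have h1 := hcolV t.2
    rw [Fintype.sum_prod_type_right] at h1
    exact h1
  set pI : (((A × A') × (B × B')) × (A' × B')) → ℝ :=
    fun k => q k.1 * (s1 k.1 k.2.1 * s2 k.1 k.2.2) with hpIdef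
  set αf : (((A × A') × (B × B')) × (A' × B')) → A → ℂ :=
    fun k a => if s1 k.1 k.2.1 = 0 then (if a = a₀ then 1 else 0)
      else ((Real.sqrt (s1 k.1 k.2.1) : ℂ))⁻¹ * U (a, k.2.1) k.1.1 with hαfdef
  set βf : (((A × A') × (B × B')) × (A' × B')) → B → ℂ :=
    fun k b => if s2 k.1 k.2.2 = 0 then (if b = b₀ then 1 else 0)
      else ((Real.sqrt (s2 k.1 k.2.2) : ℂ))⁻¹ * V (b, k.2.2) k.1.2 with hβfdef
  refine ⟨(((A × A') × (B × B')) × (A' × B')), inferInstance, pI, αf, βf,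
    fun k => mul_nonneg (hq0 _) (mul_nonneg (hs1nn _ _) (hs2nn _ _)), ?_, ?_, ?_, ?_⟩
  · -- total probability
    rw [Fintype.sum_prod_type]
    have h1 : ∀ t, ∑ y : A' × B', pI (t, y) = q t := by
      intro t
      have h2 : ∀ y : A' × B', pI (t, y) = q t * (s1 t y.1 * s2 t y.2) := fun y => rfl
      rw [Finset.sum_congr rfl fun y _ => h2 y, ← Finset.mul_sum, Fintype.sum_prod_type,
        ← Finset.sum_mul_sum, hs1sum t, hs2sum t, one_mul, mul_one]
    rw [Finset.sum_congr rfl fun t _ => h1 t, htrσ]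
  · -- α normalization
    intro k
    by_cases h : s1 k.1 k.2.1 = 0
    · simp only [hαfdef, if_pos h]
      have h2 : ∀ a : A, star (if a = a₀ then (1:ℂ) else 0) * (if a = a₀ then (1:ℂ) else 0)
          = if a = a₀ then 1 else 0 := fun a => by by_cases ha : a = a₀ <;> simp [ha]
      rw [Finset.sum_congr rfl fun a _ => h2 a]
      simp
    · simp only [hαfdef, if_neg h]
      have hnn := hs1nn k.1 k.2.1
      have hterm : ∀ a : A,
          star (((Real.sqrt (s1 k.1 k.2.1) : ℂ))⁻¹ * U (a, k.2.1) k.1.1) *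
            (((Real.sqrt (s1 k.1 k.2.1) : ℂ))⁻¹ * U (a, k.2.1) k.1.1)
          = ((s1 k.1 k.2.1 : ℂ))⁻¹ * ((Complex.normSq (U (a, k.2.1) k.1.1) : ℝ) : ℂ) := by
        intro a
        rw [star_mul']
        rw [show star (((Real.sqrt (s1 k.1 k.2.1) : ℂ))⁻¹) = ((Real.sqrt (s1 k.1 k.2.1) : ℂ))⁻¹
          by rw [← Complex.ofReal_inv, Complex.star_def, Complex.conj_ofReal]]
        rw [Complex.normSq_eq_conj_mul_self]
        rw [show ((s1 k.1 k.2.1 : ℂ))⁻¹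
            = ((Real.sqrt (s1 k.1 k.2.1) : ℂ))⁻¹ * ((Real.sqrt (s1 k.1 k.2.1) : ℂ))⁻¹ by
          rw [← mul_inv, ← Complex.ofReal_mul, Real.mul_self_sqrt hnn]]
        rw [Complex.star_def]
        ring
      rw [Finset.sum_congr rfl fun a _ => hterm a, ← Finset.mul_sum]
      rw [show (∑ a, ((Complex.normSq (U (a, k.2.1) k.1.1) : ℝ) : ℂ)) = ((s1 k.1 k.2.1 : ℂ)) by
        rw [← Complex.ofReal_sum]]
      exact inv_mul_cancel₀ (Complex.ofReal_ne_zero.mpr h)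
  · -- β normalization
    intro k
    by_cases h : s2 k.1 k.2.2 = 0
    · simp only [hβfdef, if_pos h]
      have h2 : ∀ b : B, star (if b = b₀ then (1:ℂ) else 0) * (if b = b₀ then (1:ℂ) else 0)
          = if b = b₀ then 1 else 0 := fun b => by by_cases hb : b = b₀ <;> simp [hb]
      rw [Finset.sum_congr rfl fun b _ => h2 b]
      simp
    · simp only [hβfdef, if_neg h]
      have hnn := hs2nn k.1 k.2.2
      have hterm : ∀ b : B,
          star (((Real.sqrt (s2 k.1 k.2.2) : ℂ))⁻¹ * V (b, k.2.2) k.1.2) *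
            (((Real.sqrt (s2 k.1 k.2.2) : ℂ))⁻¹ * V (b, k.2.2) k.1.2)
          = ((s2 k.1 k.2.2 : ℂ))⁻¹ * ((Complex.normSq (V (b, k.2.2) k.1.2) : ℝ) : ℂ) := by
        intro b
        rw [star_mul']
        rw [show star (((Real.sqrt (s2 k.1 k.2.2) : ℂ))⁻¹) = ((Real.sqrt (s2 k.1 k.2.2) : ℂ))⁻¹
          by rw [← Complex.ofReal_inv, Complex.star_def, Complex.conj_ofReal]]
        rw [Complex.normSq_eq_conj_mul_self]
        rw [show ((s2 k.1 k.2.2 : ℂ))⁻¹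
            = ((Real.sqrt (s2 k.1 k.2.2) : ℂ))⁻¹ * ((Real.sqrt (s2 k.1 k.2.2) : ℂ))⁻¹ by
          rw [← mul_inv, ← Complex.ofReal_mul, Real.mul_self_sqrt hnn]]
        rw [Complex.star_def]
        ring
      rw [Finset.sum_congr rfl fun b _ => hterm b, ← Finset.mul_sum]
      rw [show (∑ b, ((Complex.normSq (V (b, k.2.2) k.1.2) : ℝ) : ℂ)) = ((s2 k.1 k.2.2 : ℂ)) by
        rw [← Complex.ofReal_sum]]
      exact inv_mul_cancel₀ (Complex.ofReal_ne_zero.mpr h)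
  · -- the separable decomposition reproduces ρ
    ext ⟨a, b⟩ ⟨c, d⟩
    rw [← hmarg a c b d]
    have claim : ∀ (t : (A × A') × (B × B')) (a' : A') (b' : B'),
        (pI (t, (a', b')) : ℂ) *
          ((αf (t, (a', b')) a * star (αf (t, (a', b')) c)) *
           (βf (t, (a', b')) b * star (βf (t, (a', b')) d)))
        = ((q t : ℝ) : ℂ) * ((U (a, a') t.1 * V (b, b') t.2) *
            star (U (c, a') t.1 * V (d, b') t.2)) := by
      intro t a' b'
      by_cases h1 : s1 t a' = 0
      · have hz : ∀ x : A, U (x, a') t.1 = 0 := by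
          intro x
          have h3 := (Finset.sum_eq_zero_iff_of_nonneg
            (fun i (_ : i ∈ Finset.univ) => Complex.normSq_nonneg (U (i, a') t.1))).mp h1 x
            (Finset.mem_univ x)
          exact Complex.normSq_eq_zero.mp h3
        simp [hpIdef, h1, hz]
      · by_cases h2 : s2 t b' = 0
        · have hz : ∀ x : B, V (x, b') t.2 = 0 := by
            intro x
            have h3 := (Finset.sum_eq_zero_iff_of_nonneg
              (fun i (_ : i ∈ Finset.univ) => Complex.normSq_nonneg (V (i, b') t.2))).mp h2 x
              (Finset.mem_univ x)
            exact Complex.normSq_eq_zero.mp h3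
          simp [hpIdef, h2, hz]
        · simp only [hpIdef, hαfdef, hβfdef, if_neg h1, if_neg h2]
          have e1 : ((Real.sqrt (s1 t a') : ℂ))⁻¹ * ((Real.sqrt (s1 t a') : ℂ))⁻¹
              = ((s1 t a' : ℂ))⁻¹ := by
            rw [← mul_inv, ← Complex.ofReal_mul, Real.mul_self_sqrt (hs1nn t a')]
          have e2 : ((Real.sqrt (s2 t b') : ℂ))⁻¹ * ((Real.sqrt (s2 t b') : ℂ))⁻¹
              = ((s2 t b' : ℂ))⁻¹ := by
            rw [← mul_inv, ← Complex.ofReal_mul, Real.mul_self_sqrt (hs2nn t b')]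
          have hstar1 : star (((Real.sqrt (s1 t a') : ℂ))⁻¹) = ((Real.sqrt (s1 t a') : ℂ))⁻¹ := by
            rw [← Complex.ofReal_inv, Complex.star_def, Complex.conj_ofReal]
          have hstar2 : star (((Real.sqrt (s2 t b') : ℂ))⁻¹) = ((Real.sqrt (s2 t b') : ℂ))⁻¹ := by
            rw [← Complex.ofReal_inv, Complex.star_def, Complex.conj_ofReal]
          have hne1 : ((s1 t a' : ℝ) : ℂ) ≠ 0 := Complex.ofReal_ne_zero.mpr h1
          have hne2 : ((s2 t b' : ℝ) : ℂ) ≠ 0 := Complex.ofReal_ne_zero.mpr h2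
          push_cast
          simp only [star_mul', hstar1, hstar2]
          ring_nf
          rw [sq, e1, sq, e2]
          field_simp
    simp only [Matrix.sum_apply, Matrix.smul_apply, Matrix.kroneckerMap_apply, Matrix.of_apply,
      smul_eq_mul]
    calc (∑ a' : A', ∑ b' : B', τ ((a, a'), (b, b')) ((c, a'), (d, b')))
        = ∑ a' : A', ∑ b' : B', ∑ t, ((q t : ℝ) : ℂ) *
            ((U (a, a') t.1 * V (b, b') t.2) * star (U (c, a') t.1 * V (d, b') t.2)) := by
          refine Finset.sum_congr rfl fun a' _ => Finset.sum_congr rfl fun b' _ => ?_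
          rw [hτentry]
          exact Finset.sum_congr rfl fun t _ => by rw [hWm]; rfl
      _ = ∑ t, ∑ a' : A', ∑ b' : B', ((q t : ℝ) : ℂ) *
            ((U (a, a') t.1 * V (b, b') t.2) * star (U (c, a') t.1 * V (d, b') t.2)) := by
          refine Eq.trans (Finset.sum_congr rfl fun a' _ => Finset.sum_comm) Finset.sum_comm
      _ = ∑ k : (((A × A') × (B × B')) × (A' × B')),
            (pI k : ℂ) * ((αf k a * star (αf k c)) * (βf k b * star (βf k d))) := by
          conv_rhs => rw [Fintype.sum_prod_type]
          refine Finset.sum_congr rfl fun t _ => ?_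
          conv_rhs => rw [Fintype.sum_prod_type]
          exact Finset.sum_congr rfl fun a' _ => Finset.sum_congr rfl fun b' _ =>
            (claim t a' b').symm
end mp


/-- A bipartite state admits an extension whose correlated coherence (with
respect to the local eigenbases of the extension's reduced states) vanishes
if and only if the state is separable. -/
theorem stmt_6 {A B : Type} [Fintype A] [DecidableEq A] [Fintype B] [DecidableEq B]
    (ρ : Matrix (A × B) (A × B) ℂ) (hρ : ρ.PosSemidef) (htr : ρ.trace = 1) :
    (∃ (A' B' : Type) (_ : Fintype A') (_ : DecidableEq A') (_ : Fintype B')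
        (_ : DecidableEq B')
        (τ : Matrix ((A × A') × (B × B')) ((A × A') × (B × B')) ℂ),
      τ.PosSemidef ∧ τ.trace = 1 ∧
      (∀ (a c : A) (b d : B),
        (∑ a' : A', ∑ b' : B', τ ((a, a'), (b, b')) ((c, a'), (d, b'))) = ρ (a, b) (c, d)) ∧
      ∃ (U : Matrix (A × A') (A × A') ℂ) (V : Matrix (B × B') (B × B') ℂ),
        U ∈ Matrix.unitaryGroup (A × A') ℂ ∧ V ∈ Matrix.unitaryGroup (B × B') ℂ ∧
        (Uᴴ * (Matrix.of fun x x' : A × A' => ∑ y : B × B', τ (x, y) (x', y)) * U).IsDiag ∧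
        (Vᴴ * (Matrix.of fun y y' : B × B' => ∑ x : A × A', τ (x, y) (x, y')) * V).IsDiag ∧
        coh ((U ⊗ₖ V)ᴴ * τ * (U ⊗ₖ V)) = 0) ↔
    (∃ (I : Type) (_ : Fintype I) (p : I → ℝ) (α : I → A → ℂ) (β : I → B → ℂ),
      (∀ i, 0 ≤ p i) ∧ (∑ i, p i) = 1 ∧
      (∀ i, ∑ x, star (α i x) * α i x = 1) ∧
      (∀ i, ∑ x, star (β i x) * β i x = 1) ∧
      ρ = ∑ i, (p i : ℂ) •
        ((Matrix.of fun x y : A => α i x * star (α i y)) ⊗ₖ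
          (Matrix.of fun x y : B => β i x * star (β i y)))) := by
  have hne : Nonempty (A × B) := by
    by_contra h
    rw [not_nonempty_iff] at h
    rw [Matrix.trace, Finset.univ_eq_empty, Finset.sum_empty] at htr
    exact zero_ne_one htr
  obtain ⟨⟨a₀, b₀⟩⟩ := hne
  constructor
  · rintro ⟨A', B', _, _, _, _, τ, hps, htr', hmarg, U, V, hU, hV, _, _, hcoh⟩
    exact mp_main ρ a₀ b₀ τ hps htr' hmarg U V hU hV hcoh
  · rintro ⟨I, _, p, α, β, hp, hsum, hα, hβ, hρeq⟩
    haveI := Classical.decEq I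
    exact mpr_main ρ a₀ b₀ p α β hp hsum hα hβ hρeq
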